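/- Let a and b be coprime positive integers, let p be a prime number with p ∤ b, and write a = p^r·a' with p ∤ a'. Let Δ(t) = (1 − t)(1 − t^{ab}) / ((1 − t^a)(1 − t^b)) = ∏_{m | ab, m ∤ a, m ∤ b} Φ_m(t), the Alexander polynomial of the (a,b)-torus knot, which lies in ℤ[t]. Then for every n ≥ 0, |Res(t^{p^n} − 1, Δ(t))| = b^{p^{min(n,r)} − 1}. In particular, the sequence (|Res(t^{p^n} − 1, Δ(t))|)_n converges to b^{p^r − 1} in ℤ_p. -/

import Mathlib

open Filter Topology Polynomial

/-- The `n`-th cyclic resultant of `f ∈ ℤ[t]`, computed in `ℂ` as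
`Res(t^n − 1, f(t)) = ∏_{ζ^n = 1} f(ζ)`, the product over all complex `n`-th roots of unity. -/
noncomputable def cyclicResultantC (n : ℕ) (f : Polynomial ℤ) : ℂ :=
  ((Polynomial.nthRoots n (1 : ℂ)).map (fun ζ => Polynomial.aeval ζ f)).prod

/-- The Alexander polynomial of the `(a,b)`-torus knot:
`Δ(t) = (1 − t)(1 − t^{ab}) / ((1 − t^a)(1 − t^b)) = ∏_{m ∣ ab, m ∤ a, m ∤ b} Φ_m(t) ∈ ℤ[t]`. -/
noncomputable def torusKnotAlexander (a b : ℕ) : Polynomial ℤ :=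
  ∏ m ∈ (Nat.divisors (a * b)).filter (fun m => ¬ m ∣ a ∧ ¬ m ∣ b),
    Polynomial.cyclotomic m ℤ

section Aux

open Finset

lemma aux_pow_mod {ζ : ℂ} {N : ℕ} (hζ : ζ ^ N = 1) (m : ℕ) : ζ ^ m = ζ ^ (m % N) := by
  conv_lhs => rw [← Nat.mod_add_div m N]
  rw [pow_add, pow_mul, hζ, one_pow, mul_one]

lemma aux_pow_modEq {ζ : ℂ} {N : ℕ} (hζ : ζ ^ N = 1) {m k : ℕ} (h : m ≡ k [MOD N]) :
    ζ ^ m = ζ ^ k := by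
  rw [aux_pow_mod hζ m, aux_pow_mod hζ k, h]

/-- The key polynomial identity `Δ(t)·(t^a−1)·(t^b−1) = (t^{ab}−1)·(t−1)` in `ℤ[t]`. -/
lemma aux_key_identity (a b : ℕ) (ha : 0 < a) (hb : 0 < b) (hab : Nat.Coprime a b) :
    torusKnotAlexander a b * ((X : Polynomial ℤ) ^ a - 1) * ((X : Polynomial ℤ) ^ b - 1)
      = ((X : Polynomial ℤ) ^ (a * b) - 1) * ((X : Polynomial ℤ) - 1) := by
  classical
  have hab0 : 0 < a * b := Nat.mul_pos ha hb
  set S := Nat.divisors (a * b) with hS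
  have h1 : ((X : Polynomial ℤ) ^ (a * b) - 1) = ∏ m ∈ S, cyclotomic m ℤ :=
    (prod_cyclotomic_eq_X_pow_sub_one hab0 ℤ).symm
  have h2 : ∏ m ∈ S, cyclotomic m ℤ
      = (∏ m ∈ S.filter (fun m => m ∣ a), cyclotomic m ℤ)
        * ∏ m ∈ S.filter (fun m => ¬ m ∣ a), cyclotomic m ℤ :=
    (Finset.prod_filter_mul_prod_filter_not S _ _).symm
  have h3 : ∏ m ∈ S.filter (fun m => ¬ m ∣ a), cyclotomic m ℤ
      = (∏ m ∈ (S.filter (fun m => ¬ m ∣ a)).filter (fun m => m ∣ b), cyclotomic m ℤ)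
        * ∏ m ∈ (S.filter (fun m => ¬ m ∣ a)).filter (fun m => ¬ m ∣ b), cyclotomic m ℤ :=
    (Finset.prod_filter_mul_prod_filter_not _ _ _).symm
  have hA : S.filter (fun m => m ∣ a) = Nat.divisors a := by
    ext m
    simp only [Finset.mem_filter, Nat.mem_divisors, hS]
    constructor
    · rintro ⟨⟨-, -⟩, hma⟩; exact ⟨hma, ha.ne'⟩
    · rintro ⟨hma, -⟩; exact ⟨⟨hma.mul_right b, hab0.ne'⟩, hma⟩
  have hB : (S.filter (fun m => ¬ m ∣ a)).filter (fun m => m ∣ b)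
      = (Nat.divisors b).erase 1 := by
    ext m
    simp only [Finset.mem_filter, Nat.mem_divisors, Finset.mem_erase, hS]
    constructor
    · rintro ⟨⟨-, hma⟩, hmb⟩
      refine ⟨fun h => hma (h ▸ one_dvd a), hmb, hb.ne'⟩
    · rintro ⟨hm1, hmb, -⟩
      refine ⟨⟨⟨hmb.mul_left a, hab0.ne'⟩, fun hma => hm1 ?_⟩, hmb⟩
      exact Nat.eq_one_of_dvd_one (hab ▸ Nat.dvd_gcd hma hmb)
  have hC : (S.filter (fun m => ¬ m ∣ a)).filter (fun m => ¬ m ∣ b)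
      = S.filter (fun m => ¬ m ∣ a ∧ ¬ m ∣ b) := by
    rw [Finset.filter_filter]
  have hPA : ∏ m ∈ S.filter (fun m => m ∣ a), cyclotomic m ℤ = (X : Polynomial ℤ) ^ a - 1 := by
    rw [hA, prod_cyclotomic_eq_X_pow_sub_one ha]
  have hPB : (∏ m ∈ (S.filter (fun m => ¬ m ∣ a)).filter (fun m => m ∣ b), cyclotomic m ℤ)
      * ((X : Polynomial ℤ) - 1) = (X : Polynomial ℤ) ^ b - 1 := by
    rw [hB]
    calc (∏ m ∈ (Nat.divisors b).erase 1, cyclotomic m ℤ) * ((X : Polynomial ℤ) - 1)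
        = cyclotomic 1 ℤ * ∏ m ∈ (Nat.divisors b).erase 1, cyclotomic m ℤ := by
          rw [cyclotomic_one]; ring
      _ = ∏ m ∈ Nat.divisors b, cyclotomic m ℤ :=
          Finset.mul_prod_erase b.divisors (fun m => cyclotomic m ℤ) (Nat.one_mem_divisors.mpr hb.ne')
      _ = (X : Polynomial ℤ) ^ b - 1 := prod_cyclotomic_eq_X_pow_sub_one hb ℤ
  have hPC : (∏ m ∈ (S.filter (fun m => ¬ m ∣ a)).filter (fun m => ¬ m ∣ b), cyclotomic m ℤ)
      = torusKnotAlexander a b := by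
    rw [hC, torusKnotAlexander]
  rw [h1, h2, h3, hPC, hPA, ← hPB]
  ring

lemma aux_key_identity2 (a b : ℕ) (ha : 0 < a) (hb : 0 < b) (hab : Nat.Coprime a b) :
    torusKnotAlexander a b * (∑ i ∈ Finset.range b, (X : Polynomial ℤ) ^ i)
      = ∑ j ∈ Finset.range b, ((X : Polynomial ℤ) ^ a) ^ j := by
  have h := aux_key_identity a b ha hb hab
  have hg1 : (∑ i ∈ Finset.range b, (X : Polynomial ℤ) ^ i) * ((X : Polynomial ℤ) - 1)
      = (X : Polynomial ℤ) ^ b - 1 := geom_sum_mul _ _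
  have hg2 : (∑ j ∈ Finset.range b, ((X : Polynomial ℤ) ^ a) ^ j)
      * ((X : Polynomial ℤ) ^ a - 1) = (X : Polynomial ℤ) ^ (a * b) - 1 := by
    rw [geom_sum_mul, ← pow_mul]
  have hXa : ((X : Polynomial ℤ) ^ a - 1) ≠ 0 := by
    have := monic_X_pow_sub_C (1 : ℤ) ha.ne'
    simpa using this.ne_zero
  have hX1 : ((X : Polynomial ℤ) - 1) ≠ 0 := by
    have := monic_X_pow_sub_C (1 : ℤ) one_ne_zero
    simpa using this.ne_zero
  apply mul_right_cancel₀ (mul_ne_zero hXa hX1)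
  linear_combination torusKnotAlexander a b * ((X : Polynomial ℤ) ^ a - 1) * hg1 + h
    - ((X : Polynomial ℤ) - 1) * hg2

lemma aux_cyclicResultantC_mul (N : ℕ) (f g : Polynomial ℤ) :
    cyclicResultantC N (f * g) = cyclicResultantC N f * cyclicResultantC N g := by
  unfold cyclicResultantC
  rw [← Multiset.prod_map_mul]
  congr 1
  exact Multiset.map_congr rfl fun ζ _ => map_mul _ _ _

lemma aux_cyclicResultantC_eq_prod (N : ℕ) (hN : 0 < N) (f : Polynomial ℤ) :
    cyclicResultantC N f = ∏ ζ ∈ nthRootsFinset N (1 : ℂ), aeval ζ f := by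
  classical
  have hprim := Complex.isPrimitiveRoot_exp N hN.ne'
  have hnd := hprim.nthRoots_one_nodup
  rw [cyclicResultantC, Finset.prod_eq_multiset_prod, nthRootsFinset_def, Multiset.toFinset_val,
    Multiset.dedup_eq_self.mpr hnd]

lemma aux_filter_card (N c : ℕ) (hN : 0 < N) (hc : 0 < c) :
    ((nthRootsFinset N (1 : ℂ)).filter (fun ζ => ζ ^ c = 1)).card = Nat.gcd c N := by
  classical
  have hg : 0 < Nat.gcd c N := Nat.gcd_pos_of_pos_left _ hc
  have hset : (nthRootsFinset N (1 : ℂ)).filter (fun ζ => ζ ^ c = 1)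
      = nthRootsFinset (Nat.gcd c N) (1 : ℂ) := by
    ext ζ
    simp only [Finset.mem_filter, mem_nthRootsFinset hN, mem_nthRootsFinset hg]
    constructor
    · rintro ⟨h1, h2⟩
      exact orderOf_dvd_iff_pow_eq_one.mp
        (Nat.dvd_gcd (orderOf_dvd_of_pow_eq_one h2) (orderOf_dvd_of_pow_eq_one h1))
    · intro h
      obtain ⟨k, hk⟩ := Nat.gcd_dvd_right c N
      obtain ⟨l, hl⟩ := Nat.gcd_dvd_left c N
      constructor
      · rw [hk, pow_mul, h, one_pow]
      · rw [hl, pow_mul, h, one_pow]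
  rw [hset, (Complex.isPrimitiveRoot_exp _ hg.ne').card_nthRootsFinset]

lemma aux_prod_T_eq_one (N b c : ℕ) (hN : 0 < N) (hbN : Nat.Coprime b N) :
    ∏ ζ ∈ (nthRootsFinset N (1 : ℂ)).filter (fun ζ => ¬ ζ ^ c = 1),
      (∑ j ∈ Finset.range b, (ζ ^ c) ^ j) = 1 := by
  classical
  haveI : NeZero N := ⟨hN.ne'⟩
  obtain ⟨u, hu⟩ : ∃ u, b * u ≡ 1 [MOD N] := by
    refine ⟨((b : ZMod N)⁻¹).val, (ZMod.natCast_eq_natCast_iff _ _ _).mp ?_⟩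
    push_cast
    rw [ZMod.natCast_val, ZMod.cast_id, ZMod.coe_mul_inv_eq_one b hbN]
  set T := (nthRootsFinset N (1 : ℂ)).filter (fun ζ => ¬ ζ ^ c = 1) with hT
  have hmem : ∀ ζ ∈ T, ζ ^ N = 1 ∧ ¬ ζ ^ c = 1 := by
    intro ζ hζ
    rw [hT, Finset.mem_filter, mem_nthRootsFinset hN] at hζ
    exact hζ
  have hstep : ∀ ζ ∈ T, ∀ v w : ℕ, v * w ≡ 1 [MOD N] → ζ ^ v ∈ T := by
    intro ζ hζ v w hv
    obtain ⟨h1, h2⟩ := hmem ζ hζ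
    rw [hT, Finset.mem_filter, mem_nthRootsFinset hN]
    refine ⟨by rw [← pow_mul, mul_comm, pow_mul, h1, one_pow], fun hcon => h2 ?_⟩
    have hme : c * v * w ≡ c [MOD N] := by
      calc c * v * w = c * (v * w) := by ring
        _ ≡ c * 1 [MOD N] := Nat.ModEq.mul_left c hv
        _ = c := by ring
    calc ζ ^ c = ζ ^ (c * v * w) := (aux_pow_modEq h1 hme).symm
      _ = ((ζ ^ v) ^ c) ^ w := by rw [← pow_mul, ← pow_mul]; congr 1; ring
      _ = 1 := by rw [hcon, one_pow]
  have hub : u * b ≡ 1 [MOD N] := by rwa [Nat.mul_comm u b]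
  have hTb : ∀ ζ ∈ T, ζ ^ b ∈ T := fun ζ hζ => hstep ζ hζ b u hu
  have hTu : ∀ ζ ∈ T, ζ ^ u ∈ T := fun ζ hζ => hstep ζ hζ u b hub
  have hbij : ∏ ζ ∈ T, ((ζ ^ c) ^ b - 1) = ∏ ζ ∈ T, (ζ ^ c - 1) := by
    refine Finset.prod_nbij' (fun ζ => ζ ^ b) (fun ζ => ζ ^ u) hTb hTu ?_ ?_ ?_
    · intro ζ hζ
      calc (ζ ^ b) ^ u = ζ ^ (b * u) := by rw [← pow_mul]
        _ = ζ ^ 1 := aux_pow_modEq (hmem ζ hζ).1 hu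
        _ = ζ := pow_one ζ
    · intro ζ hζ
      calc (ζ ^ u) ^ b = ζ ^ (u * b) := by rw [← pow_mul]
        _ = ζ ^ 1 := aux_pow_modEq (hmem ζ hζ).1 hub
        _ = ζ := pow_one ζ
    · intro ζ hζ
      show (ζ ^ c) ^ b - 1 = (ζ ^ b) ^ c - 1
      rw [← pow_mul, ← pow_mul, mul_comm]
  have hP : (∏ ζ ∈ T, (ζ ^ c - 1)) ≠ 0 :=
    Finset.prod_ne_zero_iff.mpr fun ζ hζ => sub_ne_zero.mpr (hmem ζ hζ).2
  apply mul_right_cancel₀ hP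
  rw [one_mul, ← Finset.prod_mul_distrib, ← hbij]
  exact Finset.prod_congr rfl fun ζ _ => geom_sum_mul _ _

lemma aux_prod_geom (N b c : ℕ) (hN : 0 < N) (hc : 0 < c) (hbN : Nat.Coprime b N) :
    ∏ ζ ∈ nthRootsFinset N (1 : ℂ), (∑ j ∈ Finset.range b, (ζ ^ c) ^ j)
      = (b : ℂ) ^ Nat.gcd c N := by
  classical
  have h1 : ∏ ζ ∈ (nthRootsFinset N (1 : ℂ)).filter (fun ζ => ζ ^ c = 1),
      (∑ j ∈ Finset.range b, (ζ ^ c) ^ j) = (b : ℂ) ^ Nat.gcd c N := by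
    rw [← aux_filter_card N c hN hc, ← Finset.prod_const]
    refine Finset.prod_congr rfl fun ζ hζ => ?_
    rw [(Finset.mem_filter.mp hζ).2]
    simp
  rw [← Finset.prod_filter_mul_prod_filter_not (nthRootsFinset N (1 : ℂ)) (fun ζ => ζ ^ c = 1), h1,
    aux_prod_T_eq_one N b c hN hbN, mul_one]

end Aux

/-- For coprime positive `a, b`, a prime `p ∤ b` with `a = p^r·a'`, `p ∤ a'`,
and `Δ` the Alexander polynomial of the torus knot `T_{a,b}`, we have
`|Res(t^{p^n} − 1, Δ)| = b^{p^{min(n,r)} − 1}` for all `n`, so these values converge to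
`b^{p^r − 1}` in `ℤ_p`. -/
theorem torus_knot_cyclic_resultants
    (a b : ℕ) (ha : 0 < a) (hb : 0 < b) (hab : Nat.Coprime a b)
    (p : ℕ) [hp : Fact p.Prime] (hpb : ¬ p ∣ b)
    (r a' : ℕ) (haa' : a = p ^ r * a') (hpa' : ¬ p ∣ a')
    (R : ℕ → ℤ)
    (hR : ∀ n, ((R n : ℤ) : ℂ) = cyclicResultantC (p ^ n) (torusKnotAlexander a b)) :
    (∀ n, (R n).natAbs = b ^ (p ^ min n r - 1)) ∧
    Tendsto (fun n => (((R n).natAbs : ℤ_[p]))) atTop (𝓝 ((b : ℤ_[p]) ^ (p ^ r - 1))) := by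
  classical
  have hkey : ∀ n, (R n).natAbs = b ^ (p ^ min n r - 1) := by
    intro n
    set N := p ^ n with hN
    have hN0 : 0 < N := pow_pos hp.out.pos n
    have hbN : Nat.Coprime b N := ((hp.out.coprime_iff_not_dvd.mpr hpb).pow_left n).symm
    have hgcd : Nat.gcd a N = p ^ min n r := by
      have hca : Nat.Coprime a' N := ((hp.out.coprime_iff_not_dvd.mpr hpa').pow_left n).symm
      rw [haa', Nat.Coprime.gcd_mul_right_cancel _ hca]
      rcases le_total r n with hrn | hnr
      · rw [Nat.gcd_eq_left (pow_dvd_pow p hrn), min_eq_right hrn]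
      · rw [Nat.gcd_eq_right (pow_dvd_pow p hnr), min_eq_left hnr]
    -- compute the two geometric-sum resultants
    have hg1 : cyclicResultantC N (∑ i ∈ Finset.range b, (X : Polynomial ℤ) ^ i) = (b : ℂ) := by
      rw [aux_cyclicResultantC_eq_prod N hN0]
      have : ∀ ζ ∈ nthRootsFinset N (1 : ℂ),
          (aeval ζ) (∑ i ∈ Finset.range b, (X : Polynomial ℤ) ^ i)
            = ∑ j ∈ Finset.range b, (ζ ^ 1) ^ j := by
        intro ζ _
        simp
      rw [Finset.prod_congr rfl this, aux_prod_geom N b 1 hN0 one_pos hbN, Nat.gcd_one_left,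
        pow_one]
    have hg2 : cyclicResultantC N (∑ j ∈ Finset.range b, ((X : Polynomial ℤ) ^ a) ^ j)
        = (b : ℂ) ^ p ^ min n r := by
      rw [aux_cyclicResultantC_eq_prod N hN0]
      have : ∀ ζ ∈ nthRootsFinset N (1 : ℂ),
          (aeval ζ) (∑ j ∈ Finset.range b, ((X : Polynomial ℤ) ^ a) ^ j)
            = ∑ j ∈ Finset.range b, (ζ ^ a) ^ j := by
        intro ζ _
        simp
      rw [Finset.prod_congr rfl this, aux_prod_geom N b a hN0 ha hbN, hgcd]
    have hmul : cyclicResultantC N (torusKnotAlexander a b) * (b : ℂ)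
        = (b : ℂ) ^ p ^ min n r := by
      have h := aux_cyclicResultantC_mul N (torusKnotAlexander a b)
        (∑ i ∈ Finset.range b, (X : Polynomial ℤ) ^ i)
      rw [aux_key_identity2 a b ha hb hab, hg1, hg2] at h
      exact h.symm
    have hbC : (b : ℂ) ≠ 0 := Nat.cast_ne_zero.mpr hb.ne'
    have hpm : 1 ≤ p ^ min n r := Nat.one_le_pow _ _ hp.out.pos
    have hCR : cyclicResultantC N (torusKnotAlexander a b) = (b : ℂ) ^ (p ^ min n r - 1) := by
      apply mul_right_cancel₀ hbC
      rw [hmul, ← pow_succ, Nat.sub_add_cancel hpm]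
    have hRn : ((R n : ℤ) : ℂ) = (((b : ℤ) ^ (p ^ min n r - 1) : ℤ) : ℂ) := by
      rw [hR n, hCR]
      push_cast
      ring
    have : R n = (b : ℤ) ^ (p ^ min n r - 1) := by exact_mod_cast hRn
    rw [this, Int.natAbs_pow, Int.natAbs_natCast]
  refine ⟨hkey, ?_⟩
  have hev : (fun n => (((R n).natAbs : ℤ_[p])))
      =ᶠ[atTop] (fun _ => (b : ℤ_[p]) ^ (p ^ r - 1)) := by
    filter_upwards [eventually_ge_atTop r] with n hn
    rw [hkey n, min_eq_right hn]
    push_cast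
    ring
  exact Tendsto.congr' hev.symm tendsto_const_nhds
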